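/- Let A be a G-graded algebra, B a homogeneous ideal of A satisfying an ordinary polynomial identity f(x₁,…,x_m), and C a homogeneous subalgebra of A with A = B + C, such that C satisfies a multilinear graded identity g(x₁^{(g₁)},…,x_n^{(g_n)}). Then A satisfies the graded identity f(g(x₁₁^{(g₁)},…,x₁ₙ^{(g_n)}),…,g(x_{m1}^{(g₁)},…,x_{mn}^{(g_n)})) obtained by substituting disjoint copies of g into f. -/

import Mathlib

/-- Evaluation of the multilinear polynomial `∑_{σ ∈ Sₙ} c σ • x_{σ(1)} ⋯ x_{σ(n)}`
at the tuple `w`. -/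
noncomputable def evalMulti {F A : Type} [Field F] [Ring A] [Algebra F A] {n : ℕ}
    (c : Equiv.Perm (Fin n) → F) (w : Fin n → A) : A :=
  ∑ σ : Equiv.Perm (Fin n), c σ • (List.ofFn (fun i => w (σ i))).prod

/-- If each component difference lies in the two-sided ideal `B`, so does the
difference of products. -/
lemma prod_sub_mem {F A : Type} [Field F] [Ring A] [Algebra F A] (B : Submodule F A)
    (hBideal : ∀ a : A, ∀ x ∈ B, a * x ∈ B ∧ x * a ∈ B) :
    ∀ (l : List (A × A)), (∀ p ∈ l, p.1 - p.2 ∈ B) →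
      (l.map Prod.fst).prod - (l.map Prod.snd).prod ∈ B := by
  intro l
  induction l with
  | nil => simp
  | cons p l ih =>
    intro h
    simp only [List.map_cons, List.prod_cons]
    have h1 := h p (List.mem_cons_self)
    have h2 := ih (fun q hq => h q (List.mem_cons_of_mem _ hq))
    have heq : p.1 * (l.map Prod.fst).prod - p.2 * (l.map Prod.snd).prod
        = (p.1 - p.2) * (l.map Prod.fst).prod
          + p.2 * ((l.map Prod.fst).prod - (l.map Prod.snd).prod) := by noncomm_ring
    rw [heq]
    exact B.add_mem ((hBideal _ _ h1).2) ((hBideal _ _ h2).1)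

/-- Graded sum lemma: each homogeneous component of `A` splits as
`A_g = B_g + C_g`. -/
lemma gradedSum {F : Type} [Field F] {G : Type} [Group G]
    {A : Type} [Ring A] [Algebra F A] (𝒜 : G → Submodule F A)
    (hindep : iSupIndep 𝒜)
    (B C : Submodule F A)
    (hBhom : B = ⨆ g, B ⊓ 𝒜 g)
    (hChom : C = ⨆ g, C ⊓ 𝒜 g)
    (hsum : B ⊔ C = ⊤)
    (g : G) (x : A) (hx : x ∈ 𝒜 g) : x ∈ (B ⊓ 𝒜 g) ⊔ (C ⊓ 𝒜 g) := by
  classical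
  have hxBC : x ∈ B ⊔ C := hsum ▸ Submodule.mem_top
  obtain ⟨b, hb, c', hc', hbc⟩ := Submodule.mem_sup.1 hxBC
  rw [hBhom] at hb
  rw [hChom] at hc'
  obtain ⟨φ, hφ, hφsum⟩ := (Submodule.mem_iSup_iff_exists_finsupp _ _).1 hb
  obtain ⟨ψ, hψ, hψsum⟩ := (Submodule.mem_iSup_iff_exists_finsupp _ _).1 hc'
  set θ : G →₀ A := φ + ψ with hθdef
  have hθ : ∀ h, θ h ∈ 𝒜 h := fun h =>
    (𝒜 h).add_mem (hφ h).2 (hψ h).2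
  have hθsum : θ.sum (fun _ y => y) = x := by
    rw [hθdef, Finsupp.sum_add_index (by simp) (by intros; rfl), hφsum, hψsum, hbc]
  have hrest : x - θ g ∈ ⨆ (h) (_ : h ≠ g), 𝒜 h := by
    have hxe : x - θ g = ∑ h ∈ θ.support.erase g, θ h := by
      by_cases hg : g ∈ θ.support
      · rw [Finset.sum_erase_eq_sub hg, ← hθsum, Finsupp.sum]
      · rw [Finset.erase_eq_of_notMem hg, ← hθsum, Finsupp.sum,
          Finsupp.notMem_support_iff.1 hg, sub_zero]
    rw [hxe]
    apply Submodule.sum_mem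
    intro h hh
    have hne : h ≠ g := (Finset.mem_erase.1 hh).1
    exact Submodule.mem_iSup_of_mem h (Submodule.mem_iSup_of_mem hne (hθ h))
  have hmemg : x - θ g ∈ 𝒜 g := (𝒜 g).sub_mem hx (hθ g)
  have hzero : x - θ g = 0 := by
    have := (hindep g).le_bot ⟨hmemg, hrest⟩
    simpa using this
  have hxeq : x = φ g + ψ g := by
    have hx2 : x = θ g := by rwa [sub_eq_zero] at hzero
    simpa [hθdef] using hx2
  rw [hxeq]
  exact Submodule.add_mem_sup (hφ g) (hψ g)

/-- `A` a `G`-graded algebra, `A = B + C` with `B` a homogeneous ideal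
satisfying the ordinary identity `f(x₁,…,x_m)` and `C` a homogeneous subalgebra satisfying
the multilinear graded identity `g(x₁^{(g₁)},…,x_n^{(g_n)})` (with coefficients `c` and
degrees `d`).  Then `A` satisfies the graded identity
`f(g(x₁₁^{(g₁)},…,x₁ₙ^{(g_n)}),…,g(x_{m1}^{(g₁)},…,x_{mn}^{(g_n)}))` obtained by
substituting disjoint copies of `g` into `f`. -/
theorem stmt6 {F : Type} [Field F] {G : Type} [Group G]
    {A : Type} [Ring A] [Algebra F A] (𝒜 : G → Submodule F A)
    (hmul : ∀ g h : G, ∀ x ∈ 𝒜 g, ∀ y ∈ 𝒜 h, x * y ∈ 𝒜 (g * h))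
    (htop : (⨆ g, 𝒜 g) = ⊤) (hindep : iSupIndep 𝒜)
    (B C : Submodule F A)
    (hBideal : ∀ a : A, ∀ x ∈ B, a * x ∈ B ∧ x * a ∈ B)
    (hBhom : B = ⨆ g, B ⊓ 𝒜 g)
    (hCsub : ∀ x ∈ C, ∀ y ∈ C, x * y ∈ C)
    (hChom : C = ⨆ g, C ⊓ 𝒜 g)
    (hsum : B ⊔ C = ⊤)
    {m n : ℕ}
    -- the ordinary polynomial identity `f` of `B`
    (f : FreeAlgebra F (Fin m))
    (hfB : ∀ v : Fin m → A, (∀ i, v i ∈ B) → FreeAlgebra.lift F v f = 0)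
    -- the multilinear graded identity `g` of `C`, with coefficients `c`
    -- and variable degrees `d`
    (c : Equiv.Perm (Fin n) → F) (d : Fin n → G)
    (hgC : ∀ w : Fin n → A, (∀ j, w j ∈ C) → (∀ j, w j ∈ 𝒜 (d j)) → evalMulti c w = 0) :
    ∀ w : Fin m → Fin n → A, (∀ i j, w i j ∈ 𝒜 (d j)) →
      FreeAlgebra.lift F (fun i => evalMulti c (w i)) f = 0 := by
  intro w hw
  have key : ∀ i, evalMulti c (w i) ∈ B := by
    intro i
    have hdec : ∀ j, ∃ b ∈ B ⊓ 𝒜 (d j), ∃ u ∈ C ⊓ 𝒜 (d j), b + u = w i j := by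
      intro j
      exact Submodule.mem_sup.1
        (gradedSum 𝒜 hindep B C hBhom hChom hsum (d j) (w i j) (hw i j))
    choose b hb u hu hbu using hdec
    have hBdiff : evalMulti c (w i) - evalMulti c u ∈ B := by
      unfold evalMulti
      rw [← Finset.sum_sub_distrib]
      apply Submodule.sum_mem
      intro σ _
      rw [← smul_sub]
      apply Submodule.smul_mem
      have := prod_sub_mem B hBideal
        (List.ofFn (fun k => (w i (σ k), u (σ k))))
        (by
          intro p hp
          obtain ⟨k, hk⟩ := List.mem_ofFn.1 hp
          rw [← hk]
          simpa [← hbu (σ k)] using (hb (σ k)).1)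
      simpa [List.map_ofFn, Function.comp_def] using this
    have h0 : evalMulti c u = 0 :=
      hgC u (fun j => (hu j).1) (fun j => (hu j).2)
    simpa [h0] using hBdiff
  exact hfB _ key
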